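/- Let G be a finite p-group such that G/Φ(G) and Φ(G) are both non-trivial elementary abelian p-groups. Then G has exactly three characteristic subgroups (namely 1, Φ(G), G) if and only if Aut(G) acts irreducibly on both G/Φ(G) and Φ(G) viewed as F_p-vector spaces. -/
import Mathlib


/-- Let `G` be a finite `p`-group with `G/Φ(G)` and `Φ(G)` non-trivial
elementary abelian. Then `G` has exactly three characteristic subgroups
(`⊥`, `Φ(G)`, `⊤`) if and only if `Aut(G)` acts irreducibly on both `G/Φ(G)` and
`Φ(G)` as `F_p`-vector spaces.  Irreducibility is expressed via the lattice
correspondence: invariant subspaces of `G/Φ(G)` correspond to `Aut(G)`-invariant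
subgroups of `G` containing `Φ(G)`, and invariant subspaces of `Φ(G)` to
`Aut(G)`-invariant subgroups of `G` contained in `Φ(G)`. -/
theorem stmt4 {p : ℕ} [Fact p.Prime] {G : Type*} [Group G] [Finite G]
    (hp : IsPGroup p G)
    (hq_ab : ∀ a b : G ⧸ frattini G, a * b = b * a)
    (hq_exp : ∀ a : G ⧸ frattini G, a ^ p = 1)
    (hq_ne : frattini G ≠ ⊤)
    (hf_ab : ∀ a b : frattini G, a * b = b * a)
    (hf_exp : ∀ a : frattini G, a ^ p = 1)
    (hf_ne : frattini G ≠ ⊥) :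
    (∀ H : Subgroup G, H.Characteristic → H = ⊥ ∨ H = frattini G ∨ H = ⊤) ↔
      ((∀ H : Subgroup G, frattini G ≤ H →
          (∀ φ : G ≃* G, H.map φ.toMonoidHom = H) → H = frattini G ∨ H = ⊤) ∧
       (∀ K : Subgroup G, K ≤ frattini G →
          (∀ φ : G ≃* G, K.map φ.toMonoidHom = K) → K = ⊥ ∨ K = frattini G)) := by
  constructor
  · intro h
    constructor
    · intro H hle hinv
      rcases h H (Subgroup.characteristic_iff_map_eq.mpr hinv) with rfl | h' | h'
      · exact absurd (le_bot_iff.mp hle) hf_ne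
      · exact Or.inl h'
      · exact Or.inr h'
    · intro K hle hinv
      rcases h K (Subgroup.characteristic_iff_map_eq.mpr hinv) with h' | h' | rfl
      · exact Or.inl h'
      · exact Or.inr h'
      · exact absurd (top_le_iff.mp hle) hq_ne
  · rintro ⟨h1, h2⟩ H hH
    have hHmap := Subgroup.characteristic_iff_map_eq.mp hH
    have hFmap := Subgroup.characteristic_iff_map_eq.mp
      (frattini_characteristic (G := G))
    have hsup : H ⊔ frattini G = frattini G ∨ H ⊔ frattini G = ⊤ := by
      refine h1 _ le_sup_right fun φ => ?_
      rw [Subgroup.map_sup, hHmap φ, hFmap φ]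
    have hinf : H ⊓ frattini G = ⊥ ∨ H ⊓ frattini G = frattini G := by
      refine h2 _ inf_le_right fun φ => ?_
      rw [Subgroup.map_inf _ _ _ φ.injective, hHmap φ, hFmap φ]
    rcases hsup with hs | hs
    · -- H ≤ frattini G
      have hle : H ≤ frattini G := sup_eq_right.mp hs
      rw [inf_eq_left.mpr hle] at hinf
      exact hinf.imp id Or.inl
    · have : H = ⊤ := frattini_nongenerating hs
      exact Or.inr (Or.inr this)
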